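/- Let τ be a primitive substitution with fixed point X and let u, v be prefixes of X with |u| < |v|. Then there exist an integer k ≥ 1 and morphisms λ: R_v → R_u^+ and κ: R_u → R_v^+ such that τ_v ∘ κ = κ ∘ τ_u, τ_u ∘ λ = λ ∘ τ_v, κ ∘ λ = τ_v^k, and λ ∘ κ = τ_u^k. -/

import Mathlib

namespace Cobham

open Filter

variable {A : Type*} {B : Type*}

/-- The factor `X_i X_{i+1} ... X_{i+n-1}` of the sequence `X`. -/
def word (X : ℕ → A) (i n : ℕ) : List A := (List.range n).map fun k => X (i + k)

/-- `u` occurs in `X` at position `i`. -/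
def OccursAt (X : ℕ → A) (u : List A) (i : ℕ) : Prop := word X i u.length = u

def IsFactor (X : ℕ → A) (u : List A) : Prop := ∃ i, OccursAt X u i

def IsPrefix (X : ℕ → A) (u : List A) : Prop := OccursAt X u 0

/-- Uniformly recurrent: gaps between successive occurrences of any factor are bounded. -/
def UnifRec (X : ℕ → A) : Prop :=
  ∀ u, IsFactor X u → ∃ g : ℕ, ∀ i : ℕ, ∃ j, i ≤ j ∧ j ≤ i + g ∧ OccursAt X u j

/-- Return words on `u`: factors between two successive occurrences of `u` in `X`. -/
def ReturnWords (X : ℕ → A) (u : List A) : Set (List A) :=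
  { v | ∃ i j, OccursAt X u i ∧ OccursAt X u j ∧ i < j ∧
      (∀ k, i < k → k < j → ¬ OccursAt X u k) ∧ v = word X i (j - i) }

/-- Application of a morphism to a word, by concatenation. -/
def wordApply (σ : A → List B) (w : List A) : List B := w.flatMap σ

/-- Iterate of a morphism. -/
def mPow (σ : A → List A) : ℕ → A → List A
  | 0 => fun a => [a]
  | k + 1 => fun a => wordApply σ (mPow σ k a)

def Nonerasing (σ : A → List A) : Prop := ∀ a, σ a ≠ []

/-- Primitivity: some power of the morphism maps every letter to a word
containing every letter. -/
def Primitive (σ : A → List A) : Prop := ∃ k, 0 < k ∧ ∀ a b : A, b ∈ mPow σ k a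

/-- Primitivity restricted to a set of letters. -/
def PrimitiveOn (σ : A → List A) (S : Set A) : Prop :=
  ∃ k, 0 < k ∧ ∀ a ∈ S, ∀ b ∈ S, b ∈ mPow σ k a

/-- `X` is a fixed point of `σ`: the image of every prefix of `X` is a prefix of `X`. -/
def IsFixedPt (σ : A → List A) (X : ℕ → A) : Prop :=
  ∀ n, OccursAt X (wordApply σ (word X 0 n)) 0

def UltPeriodic (X : ℕ → A) : Prop :=
  ∃ N p : ℕ, 0 < p ∧ ∀ n, N ≤ n → X (n + p) = X n

def Periodic (X : ℕ → A) : Prop := ∃ p : ℕ, 0 < p ∧ ∀ n, X (n + p) = X n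

/-- `u` occurs at position `i` inside the word `w`. -/
def WOcc (u w : List A) (i : ℕ) : Prop :=
  i + u.length ≤ w.length ∧ (w.drop i).take u.length = u

/-- `D` is the derived sequence of `X` on `u`: a sequence of return words on `u`
whose concatenation is `X`. -/
def IsDerived (X : ℕ → A) (u : List A) (D : ℕ → List A) : Prop :=
  (∀ n, D n ∈ ReturnWords X u) ∧ ∀ n, OccursAt X ((word D 0 n).flatten) 0

/-- `τu` is the return substitution of `τ` on `u` (on the alphabet of return words):
`Θ_u ∘ τ_u = τ ∘ Θ_u`. -/
def RetSub (τ : A → List A) (X : ℕ → A) (u : List A)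
    (τu : List A → List (List A)) : Prop :=
  ∀ r ∈ ReturnWords X u,
    (∀ s ∈ τu r, s ∈ ReturnWords X u) ∧ (τu r).flatten = wordApply τ r

/-- Eigenvalue of a complex matrix. -/
def IsEig {n : Type*} [Fintype n] (M : Matrix n n ℂ) (μ : ℂ) : Prop :=
  ∃ v : n → ℂ, v ≠ 0 ∧ M.mulVec v = μ • v

/-- Incidence matrix of a morphism, as a complex matrix. -/
def incMat [Fintype A] [DecidableEq A] (σ : A → List A) : Matrix A A ℂ :=
  Matrix.of fun i j => (((σ j).count i : ℕ) : ℂ)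

/-- Incidence matrix of a return substitution, indexed by the set of return words. -/
def retMat [DecidableEq A] (τu : List A → List (List A)) (S : Set (List A))
    [Fintype S] : Matrix S S ℂ :=
  Matrix.of fun i j => (((τu (j : List A)).count (i : List A) : ℕ) : ℂ)

/-- `α` is the dominant eigenvalue of the incidence matrix of `σ`. -/
def IsDomEig [Fintype A] [DecidableEq A] (σ : A → List A) (α : ℝ) : Prop :=
  IsEig (incMat σ) (α : ℂ) ∧ ∀ μ : ℂ, IsEig (incMat σ) μ → ‖μ‖ ≤ α

/-- `X` is `α`-substitutive: the image under a letter-to-letter morphism of the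
fixed point of a primitive substitution with dominant eigenvalue `α`. -/
def IsSubstitutiveWith {A : Type*} (α : ℝ) (X : ℕ → A) : Prop :=
  ∃ (C : Type) (hF : Fintype C) (hD : DecidableEq C) (σ : C → List C) (c : C)
    (Y : ℕ → C) (ψ : C → A),
    Nonerasing σ ∧ (σ c).head? = some c ∧ Primitive σ ∧
    Y 0 = c ∧ IsFixedPt σ Y ∧ (∀ n, X n = ψ (Y n)) ∧ @IsDomEig C hF hD σ α

/-- Perron number: a real algebraic integer `α ≥ 1` strictly dominating the
absolute values of its other conjugates. -/
def IsPerron (α : ℝ) : Prop :=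
  1 ≤ α ∧ IsIntegral ℤ α ∧
    ∀ β : ℂ, Polynomial.aeval β (minpoly ℤ α) = 0 → β ≠ (α : ℂ) → ‖β‖ < α

section Helpers

variable {X : ℕ → A} {τ : A → List A}

theorem word_length (X : ℕ → A) (i n : ℕ) : (word X i n).length = n := by
  simp [word]

theorem word_occursAt (X : ℕ → A) (n : ℕ) : OccursAt X (word X 0 n) 0 := by
  rw [OccursAt, word_length]

theorem word_append (X : ℕ → A) (i m n : ℕ) :
    word X i (m + n) = word X i m ++ word X (i + m) n := by
  simp only [word, List.range_add, List.map_append, List.map_map]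
  congr 1
  exact List.map_congr_left fun k _ => by simp [Function.comp, Nat.add_assoc]

theorem word_split (X : ℕ → A) {i j : ℕ} (h : i ≤ j) :
    word X 0 j = word X 0 i ++ word X i (j - i) := by
  have h2 := word_append X 0 i (j - i)
  rw [Nat.zero_add] at h2
  rw [← h2, Nat.add_sub_cancel' h]

theorem word_take (X : ℕ → A) {i m n : ℕ} (h : m ≤ n) :
    (word X i n).take m = word X i m := by
  have h1 : word X i n = word X i m ++ word X (i + m) (n - m) := by
    have h2 := word_append X i m (n - m)
    rwa [Nat.add_sub_cancel' h] at h2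
  rw [h1, List.take_left' (word_length X i m)]

theorem word_drop (X : ℕ → A) {i m n : ℕ} (h : m ≤ n) :
    (word X i n).drop m = word X (i + m) (n - m) := by
  have h1 : word X i n = word X i m ++ word X (i + m) (n - m) := by
    have h2 := word_append X i m (n - m)
    rwa [Nat.add_sub_cancel' h] at h2
  rw [h1, List.drop_left' (word_length X i m)]

theorem occursAt_of_prefix {w w' : List A} {i : ℕ} (h : OccursAt X w' i)
    (hp : w <+: w') : OccursAt X w i := by
  obtain ⟨t, rfl⟩ := hp
  have h2 : word X i w.length = (word X i (w ++ t).length).take w.length :=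
    (word_take X (by simp)).symm
  rw [h, List.take_left] at h2
  exact h2

theorem prefix_of_prefixes {w w' : List A} (h : OccursAt X w 0) (h' : OccursAt X w' 0)
    (hl : w.length ≤ w'.length) : w <+: w' := by
  have h2 : w'.take w.length = w := by
    conv_lhs => rw [← h', word_take X hl]
    exact h
  exact h2 ▸ List.take_prefix _ _

theorem occursAt_append {x y : List A} {i : ℕ} (h : OccursAt X (x ++ y) i) :
    OccursAt X x i ∧ OccursAt X y (i + x.length) := by
  rw [OccursAt, List.length_append, word_append X i x.length y.length] at h
  exact List.append_inj h (word_length X i x.length)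

theorem wordApply_append {B : Type*} (f : A → List B) (w w' : List A) :
    wordApply f (w ++ w') = wordApply f w ++ wordApply f w' :=
  List.flatMap_append

theorem mPow_zero_apply (σ : A → List A) (w : List A) :
    wordApply (mPow σ 0) w = w := by
  simpa [mPow, wordApply] using List.flatMap_singleton' w

theorem wordApply_wordApply {B C : Type*} (f : B → List C) (g : A → List B) (w : List A) :
    wordApply f (wordApply g w) = wordApply (fun a => wordApply f (g a)) w :=
  List.flatMap_assoc

theorem wApow_succ (σ : A → List A) (k : ℕ) (w : List A) :
    wordApply (mPow σ (k + 1)) w = wordApply σ (wordApply (mPow σ k) w) := by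
  rw [wordApply_wordApply]; rfl

theorem wApow_succ' (σ : A → List A) (k : ℕ) (w : List A) :
    wordApply (mPow σ (k + 1)) w = wordApply (mPow σ k) (wordApply σ w) := by
  induction k generalizing w with
  | zero => rw [wApow_succ, mPow_zero_apply, mPow_zero_apply]
  | succ k ih => rw [wApow_succ, ih, ← wApow_succ]

theorem wApow_add (σ : A → List A) (s t : ℕ) (w : List A) :
    wordApply (mPow σ (s + t)) w = wordApply (mPow σ s) (wordApply (mPow σ t) w) := by
  induction s with
  | zero => rw [Nat.zero_add, mPow_zero_apply]
  | succ s ih =>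
    have h : s + 1 + t = (s + t) + 1 := by omega
    rw [h, wApow_succ, ih, ← wApow_succ]

theorem mPow_ne_nil (hne : Nonerasing σ) : ∀ (k : ℕ) (a : A), mPow σ k a ≠ [] := by
  intro k
  induction k with
  | zero => intro a; simp [mPow]
  | succ k ih =>
    intro a h
    rw [show mPow σ (k+1) a = wordApply σ (mPow σ k a) from rfl, wordApply,
      List.flatMap_eq_nil_iff] at h
    obtain ⟨x, hx⟩ := List.exists_mem_of_ne_nil _ (ih a)
    exact hne x (h x hx)

theorem wordApply_ne_nil {B : Type*} {f : A → List B} {w : List A}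
    (hf : ∀ a ∈ w, f a ≠ []) (hw : w ≠ []) : wordApply f w ≠ [] := by
  intro h
  rw [wordApply, List.flatMap_eq_nil_iff] at h
  obtain ⟨x, hx⟩ := List.exists_mem_of_ne_nil _ hw
  exact hf x hx (h x hx)

theorem flatten_wordApply {B : Type*} (f : A → List (List B)) (w : List A) :
    (wordApply f w).flatten = w.flatMap fun a => (f a).flatten := by
  induction w with
  | nil => rfl
  | cons a w ih => simp only [wordApply, List.flatMap_cons, List.flatten_append] at *; rw [ih]

theorem wordApply_flatten {B : Type*} (g : A → List B) (ds : List (List A)) :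
    wordApply g ds.flatten = ds.flatMap fun d => wordApply g d := by
  induction ds with
  | nil => rfl
  | cons d ds ih =>
    simp only [List.flatten_cons, List.flatMap_cons, wordApply_append] at *; rw [ih]

theorem flatMap_congr {B : Type*} (f g : A → List B) {l : List A}
    (h : ∀ a ∈ l, f a = g a) : l.flatMap f = l.flatMap g := by
  induction l with
  | nil => rfl
  | cons a l ih =>
    simp only [List.flatMap_cons]
    rw [h a (by simp), ih fun b hb => h b (by simp [hb])]

theorem flatMap_id' (ds : List (List A)) : (ds.flatMap fun d => d) = ds.flatten := by
  induction ds with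
  | nil => rfl
  | cons d ds ih => simp only [List.flatMap_cons, List.flatten_cons]; rw [ih]

theorem prefix_pow (hfix : IsFixedPt τ X) (k : ℕ) {w : List A} (h : OccursAt X w 0) :
    OccursAt X (wordApply (mPow τ k) w) 0 := by
  induction k with
  | zero => rwa [mPow_zero_apply]
  | succ k ih =>
    rw [wApow_succ]
    have h2 := hfix (wordApply (mPow τ k) w).length
    rw [show word X 0 (wordApply (mPow τ k) w).length = wordApply (mPow τ k) w from ih] at h2
    exact h2

theorem rw_ne_nil {r w : List A} (h : r ∈ ReturnWords X w) : r ≠ [] := by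
  obtain ⟨i, j, _, _, hij, _, rfl⟩ := h
  intro hnil
  have h2 := congrArg List.length hnil
  rw [word_length] at h2
  simp at h2
  omega

theorem w_prefix_rw {r w : List A} (h : r ∈ ReturnWords X w) : w <+: r ++ w := by
  obtain ⟨i, j, hi, hj, hij, _, rfl⟩ := h
  have hj' : word X (i + (j - i)) w.length = w := by
    rw [show i + (j - i) = j from by omega]; exact hj
  have h1 : word X i (j - i) ++ w = word X i ((j - i) + w.length) := by
    rw [word_append X i (j - i) w.length, hj']
  have h2 : (word X i ((j - i) + w.length)).take w.length = w := by
    rw [word_take X (by omega)]; exact hi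
  have h3 := List.take_prefix w.length (word X i ((j - i) + w.length))
  rw [h2] at h3
  rwa [h1]

theorem w_prefix_flatten {w : List A} {ds : List (List A)}
    (h : ∀ d ∈ ds, d ∈ ReturnWords X w) : w <+: ds.flatten ++ w := by
  induction ds with
  | nil => simp
  | cons d ds ih =>
    obtain ⟨t, ht⟩ := ih fun e he => h e (by simp [he])
    have hd : w <+: (d ++ w) ++ t :=
      (w_prefix_rw (h d (by simp))).trans (List.prefix_append _ _)
    rw [List.flatten_cons, List.append_assoc, ← ht, ← List.append_assoc]
    exact hd

theorem no_middle {r w z : List A} (hr : r ∈ ReturnWords X w) (hz : w <+: z) {p : ℕ}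
    (h0 : 0 < p) (hp : p < r.length) : ¬ w <+: (r ++ z).drop p := by
  obtain ⟨i, j, hi, hj, hij, hbet, rfl⟩ := hr
  rw [word_length] at hp
  intro hocc
  obtain ⟨t, ht⟩ := hz
  have hj' : word X (i + (j - i)) w.length = w := by
    rw [show i + (j - i) = j from by omega]; exact hj
  have h1 : word X i (j - i) ++ z = word X i ((j - i) + w.length) ++ t := by
    rw [← ht, ← List.append_assoc, word_append X i (j - i) w.length, hj']
  have hlenw : p ≤ (word X i ((j - i) + w.length)).length := by
    rw [word_length]; omega
  have h2 : (word X i ((j - i) + w.length) ++ t).drop p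
      = word X (i + p) ((j - i) + w.length - p) ++ t := by
    rw [List.drop_append_of_le_length hlenw,
      word_drop X (show p ≤ (j - i) + w.length from by omega)]
  rw [h1, h2] at hocc
  have h3 : ((word X (i + p) ((j - i) + w.length - p)) ++ t).take w.length
      = word X (i + p) w.length := by
    rw [List.take_append_of_le_length (by rw [word_length]; omega),
      word_take X (show w.length ≤ (j - i) + w.length - p from by omega)]
  have h4 : word X (i + p) w.length = w := by
    rw [← h3]
    exact (List.prefix_iff_eq_take.mp hocc).symm
  exact hbet (i + p) (by omega) (by omega) h4


end Helpers

section Decomp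

variable {X : ℕ → A} {τ : A → List A}

theorem decompose {w : List A} :
    ∀ n i j, j - i ≤ n → i < j → OccursAt X w i → OccursAt X w j →
      ∃ ds : List (List A), ds ≠ [] ∧ (∀ d ∈ ds, d ∈ ReturnWords X w) ∧
        ds.flatten = word X i (j - i) := by
  intro n
  induction n with
  | zero => intro i j h1 h2 _ _; omega
  | succ n ih =>
    intro i j hn hij hi hj
    classical
    have hex : ∃ p, i < p ∧ OccursAt X w p := ⟨j, hij, hj⟩
    obtain ⟨hip, hpocc⟩ := Nat.find_spec hex
    set p := Nat.find hex with hpdef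
    have hpj : p ≤ j := Nat.find_min' hex ⟨hij, hj⟩
    have hrw : word X i (p - i) ∈ ReturnWords X w :=
      ⟨i, p, hi, hpocc, hip, fun m h1 h2 hm => (Nat.find_min hex h2) ⟨h1, hm⟩, rfl⟩
    by_cases hpj' : p = j
    · refine ⟨[word X i (j - i)], by simp, ?_, by simp⟩
      intro d hd
      rw [List.mem_singleton] at hd
      subst hd
      rwa [← hpj']
    · have hplt : p < j := lt_of_le_of_ne hpj hpj'
      obtain ⟨ds, hne, hmem, hflat⟩ := ih p j (by omega) hplt hpocc hj
      refine ⟨word X i (p - i) :: ds, by simp, ?_, ?_⟩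
      · intro d hd
        rcases List.mem_cons.mp hd with h | h
        · subst h; exact hrw
        · exact hmem d h
      · rw [List.flatten_cons, hflat]
        have h1 := word_append X i (p - i) (j - p)
        rw [show i + (p - i) = p from by omega,
          show (p - i) + (j - p) = j - i from by omega] at h1
        exact h1.symm

theorem head_eq {w d e : List A} (hd : d ∈ ReturnWords X w) (he : e ∈ ReturnWords X w)
    {xs ys : List (List A)} (hxs : ∀ x ∈ xs, x ∈ ReturnWords X w)
    (hys : ∀ y ∈ ys, y ∈ ReturnWords X w)
    (heq : d ++ xs.flatten = e ++ ys.flatten) (hle : d.length ≤ e.length) : d = e := by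
  rcases eq_or_lt_of_le hle with h | h
  · exact (List.append_inj heq h).1
  · exfalso
    have hweq : d ++ (xs.flatten ++ w) = e ++ (ys.flatten ++ w) := by
      rw [← List.append_assoc, ← List.append_assoc, heq]
    have h1 : w <+: (e ++ (ys.flatten ++ w)).drop d.length := by
      rw [← hweq, List.drop_left]
      exact w_prefix_flatten hxs
    exact no_middle he (w_prefix_flatten hys)
      (List.length_pos_iff.mpr (rw_ne_nil hd)) h h1

theorem unique_decomp {w : List A} :
    ∀ ds es : List (List A), (∀ d ∈ ds, d ∈ ReturnWords X w) →
      (∀ e ∈ es, e ∈ ReturnWords X w) → ds.flatten = es.flatten → ds = es := by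
  intro ds
  induction ds with
  | nil =>
    intro es _ hes heq
    cases es with
    | nil => rfl
    | cons e es =>
      exfalso
      rw [List.flatten_nil, List.flatten_cons] at heq
      exact rw_ne_nil (hes e (by simp)) (List.append_eq_nil_iff.mp heq.symm).1
  | cons d ds ih =>
    intro es hds hes heq
    cases es with
    | nil =>
      exfalso
      rw [List.flatten_nil, List.flatten_cons] at heq
      exact rw_ne_nil (hds d (by simp)) (List.append_eq_nil_iff.mp heq).1
    | cons e es =>
      rw [List.flatten_cons, List.flatten_cons] at heq
      have hd := hds d (by simp)
      have he := hes e (by simp)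
      have hds' : ∀ x ∈ ds, x ∈ ReturnWords X w := fun x hx => hds x (by simp [hx])
      have hes' : ∀ x ∈ es, x ∈ ReturnWords X w := fun x hx => hes x (by simp [hx])
      have hde : d = e := by
        rcases le_total d.length e.length with h | h
        · exact head_eq hd he hds' hes' heq h
        · exact (head_eq he hd hes' hds' heq.symm h).symm
      subst hde
      have h2 : ds.flatten = es.flatten := List.append_cancel_left heq
      rw [ih es hds' hes' h2]

theorem retsub_pow {u : List A} {τu : List A → List (List A)} (h : RetSub τ X u τu)
    (k : ℕ) : ∀ r ∈ ReturnWords X u, (∀ s ∈ mPow τu k r, s ∈ ReturnWords X u) ∧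
      (mPow τu k r).flatten = wordApply (mPow τ k) r := by
  induction k with
  | zero =>
    intro r hr
    constructor
    · intro s hs
      rw [show mPow τu 0 r = [r] from rfl, List.mem_singleton] at hs
      rwa [hs]
    · rw [show mPow τu 0 r = [r] from rfl, mPow_zero_apply]
      simp
  | succ k ih =>
    intro r hr
    obtain ⟨ihm, ihf⟩ := ih r hr
    constructor
    · intro s hs
      rw [show mPow τu (k+1) r = wordApply τu (mPow τu k r) from rfl, wordApply] at hs
      obtain ⟨d, hd, hsd⟩ := List.mem_flatMap.mp hs
      exact (h d (ihm d hd)).1 s hsd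
    · rw [show mPow τu (k+1) r = wordApply τu (mPow τu k r) from rfl]
      rw [flatten_wordApply]
      rw [flatMap_congr (fun d => (τu d).flatten) (fun d => wordApply τ d)
        (fun d hd => (h d (ihm d hd)).2)]
      rw [show ((mPow τu k r).flatMap fun d => wordApply τ d)
          = wordApply τ (mPow τu k r).flatten from (wordApply_flatten τ _).symm]
      rw [ihf, ← wApow_succ]

theorem two_le_length_of_mem {l : List A} {b c : A} (hb : b ∈ l) (hc : c ∈ l)
    (hbc : b ≠ c) : 2 ≤ l.length := by
  match l with
  | [] => exact absurd hb (by simp)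
  | [x] =>
    rw [List.mem_singleton] at hb hc
    exact absurd (hb.trans hc.symm) hbc
  | x :: y :: t => simp only [List.length_cons]; omega

theorem lists_eq_of_subsingleton (hsub : ∀ b c : A, b = c) {l₁ l₂ : List A}
    (h : l₁.length = l₂.length) : l₁ = l₂ :=
  List.ext_getElem h fun i h1 h2 => hsub _ _

end Decomp

theorem stmt8 {A : Type*} (τ : A → List A) (a : A) (X : ℕ → A)
    (hne : Nonerasing τ) (hhead : (τ a).head? = some a) (hprim : Primitive τ)
    (hX0 : X 0 = a) (hfix : IsFixedPt τ X)
    (u v : List A) (hu : u ≠ []) (hpu : IsPrefix X u) (hpv : IsPrefix X v)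
    (hlen : u.length < v.length)
    (τu τv : List A → List (List A))
    (hτu : RetSub τ X u τu) (hτv : RetSub τ X v τv) :
    ∃ k : ℕ, 1 ≤ k ∧ ∃ lam kap : List A → List (List A),
      (∀ r ∈ ReturnWords X v, lam r ≠ [] ∧ ∀ s ∈ lam r, s ∈ ReturnWords X u) ∧
      (∀ r ∈ ReturnWords X u, kap r ≠ [] ∧ ∀ s ∈ kap r, s ∈ ReturnWords X v) ∧
      (∀ r ∈ ReturnWords X u, wordApply τv (kap r) = wordApply kap (τu r)) ∧
      (∀ r ∈ ReturnWords X v, wordApply τu (lam r) = wordApply lam (τv r)) ∧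
      (∀ r ∈ ReturnWords X v, wordApply kap (lam r) = mPow τv k r) ∧
      (∀ r ∈ ReturnWords X u, wordApply lam (kap r) = mPow τu k r) := by
  classical
  have hpu' : OccursAt X u 0 := hpu
  have hpv' : OccursAt X v 0 := hpv
  have hulen : 0 < u.length := List.length_pos_iff.mpr hu
  by_cases hk : ∃ k, 1 ≤ k ∧ v.length ≤ (wordApply (mPow τ k) u).length
  · -- main case
    obtain ⟨k, hk1, hkv⟩ := hk
    have hFapp : ∀ x y : List A, wordApply (mPow τ k) (x ++ y)
        = wordApply (mPow τ k) x ++ wordApply (mPow τ k) y :=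
      fun x y => wordApply_append _ x y
    have hFpref : ∀ w : List A, OccursAt X w 0 →
        OccursAt X (wordApply (mPow τ k) w) 0 :=
      fun w h => prefix_pow hfix k h
    have huv : u <+: v := prefix_of_prefixes hpu' hpv' (le_of_lt hlen)
    have hvFu : v <+: wordApply (mPow τ k) u :=
      prefix_of_prefixes hpv' (hFpref u hpu') hkv
    have houv : ∀ i, OccursAt X v i → OccursAt X u i :=
      fun i h => occursAt_of_prefix h huv
    have hseg : ∀ i j : ℕ, i ≤ j → OccursAt X (wordApply (mPow τ k) (word X i (j - i)))
        (wordApply (mPow τ k) (word X 0 i)).length := by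
      intro i j hij
      have h2 := hFpref _ (word_occursAt X j)
      rw [word_split X hij, hFapp] at h2
      have h3 := (occursAt_append h2).2
      rwa [Nat.zero_add] at h3
    have himgv : ∀ p, OccursAt X u p →
        OccursAt X v (wordApply (mPow τ k) (word X 0 p)).length := by
      intro p hp
      have h1 : word X 0 (p + u.length) = word X 0 p ++ u := by
        have h2 := word_append X 0 p u.length
        rw [Nat.zero_add] at h2
        rw [h2, show word X p u.length = u from hp]
      have h2 := hFpref _ (word_occursAt X (p + u.length))
      rw [h1, hFapp] at h2
      have h3 := (occursAt_append h2).2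
      rw [Nat.zero_add] at h3
      exact occursAt_of_prefix h3 hvFu
    have hlamex : ∀ r : List A, ∃ ds : List (List A), r ∈ ReturnWords X v →
        ds ≠ [] ∧ (∀ d ∈ ds, d ∈ ReturnWords X u) ∧ ds.flatten = r := by
      intro r
      by_cases hr : r ∈ ReturnWords X v
      · obtain ⟨i, j, hi, hj, hij, -, hre⟩ := hr
        obtain ⟨ds, h1, h2, h3⟩ :=
          decompose (w := u) (j - i) i j le_rfl hij (houv i hi) (houv j hj)
        exact ⟨ds, fun _ => ⟨h1, h2, by rw [h3, hre]⟩⟩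
      · exact ⟨[], fun h => absurd h hr⟩
    have hkapex : ∀ r : List A, ∃ ds : List (List A), r ∈ ReturnWords X u →
        ds ≠ [] ∧ (∀ d ∈ ds, d ∈ ReturnWords X v) ∧
          ds.flatten = wordApply (mPow τ k) r := by
      intro r
      by_cases hr : r ∈ ReturnWords X u
      · obtain ⟨i, j, hi, hj, hij, -, hre⟩ := hr
        have hocc : OccursAt X (wordApply (mPow τ k) (word X i (j - i)))
            (wordApply (mPow τ k) (word X 0 i)).length := hseg i j (le_of_lt hij)
        have hJ : (wordApply (mPow τ k) (word X 0 j)).length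
            = (wordApply (mPow τ k) (word X 0 i)).length
              + (wordApply (mPow τ k) (word X i (j - i))).length := by
          rw [word_split X (le_of_lt hij), hFapp, List.length_append]
        have hne' : wordApply (mPow τ k) (word X i (j - i)) ≠ [] := by
          apply wordApply_ne_nil (fun x _ => mPow_ne_nil hne k x)
          intro hnil
          have h5 := congrArg List.length hnil
          rw [word_length] at h5
          simp at h5
          omega
        have hIJ : (wordApply (mPow τ k) (word X 0 i)).length
            < (wordApply (mPow τ k) (word X 0 j)).length := by
          have h6 := List.length_pos_iff.mpr hne'
          omega
        obtain ⟨ds, h1, h2, h3⟩ :=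
          decompose (w := v) _ _ _ le_rfl hIJ (himgv i hi) (himgv j hj)
        refine ⟨ds, fun _ => ⟨h1, h2, ?_⟩⟩
        rw [h3, hre, show (wordApply (mPow τ k) (word X 0 j)).length
            - (wordApply (mPow τ k) (word X 0 i)).length
            = (wordApply (mPow τ k) (word X i (j - i))).length from by omega]
        exact hocc
      · exact ⟨[], fun h => absurd h hr⟩
    choose lam hlam using hlamex
    choose kap hkap using hkapex
    have flatlam : ∀ ds : List (List A), (∀ d ∈ ds, d ∈ ReturnWords X v) →
        (ds.flatMap fun d => (lam d).flatten) = ds.flatten := by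
      intro ds hds
      rw [flatMap_congr (fun d => (lam d).flatten) (fun d => d)
        (fun d hd => (hlam d (hds d hd)).2.2), flatMap_id']
    have flatkap : ∀ ds : List (List A), (∀ d ∈ ds, d ∈ ReturnWords X u) →
        (ds.flatMap fun d => (kap d).flatten) = wordApply (mPow τ k) ds.flatten := by
      intro ds hds
      rw [flatMap_congr (fun d => (kap d).flatten) (fun d => wordApply (mPow τ k) d)
        (fun d hd => (hkap d (hds d hd)).2.2), ← wordApply_flatten]
    have flatτu : ∀ ds : List (List A), (∀ d ∈ ds, d ∈ ReturnWords X u) →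
        (ds.flatMap fun d => (τu d).flatten) = wordApply τ ds.flatten := by
      intro ds hds
      rw [flatMap_congr (fun d => (τu d).flatten) (fun d => wordApply τ d)
        (fun d hd => (hτu d (hds d hd)).2), ← wordApply_flatten]
    have flatτv : ∀ ds : List (List A), (∀ d ∈ ds, d ∈ ReturnWords X v) →
        (ds.flatMap fun d => (τv d).flatten) = wordApply τ ds.flatten := by
      intro ds hds
      rw [flatMap_congr (fun d => (τv d).flatten) (fun d => wordApply τ d)
        (fun d hd => (hτv d (hds d hd)).2), ← wordApply_flatten]
    have memwa : ∀ (f : List A → List (List A)) (ds : List (List A)) (s : List A),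
        s ∈ wordApply f ds → ∃ d ∈ ds, s ∈ f d := by
      intro f ds s hs
      rw [wordApply] at hs
      exact List.mem_flatMap.mp hs
    refine ⟨k, hk1, lam, kap, ?_, ?_, ?_, ?_, ?_, ?_⟩
    · exact fun r hr => ⟨(hlam r hr).1, (hlam r hr).2.1⟩
    · exact fun r hr => ⟨(hkap r hr).1, (hkap r hr).2.1⟩
    · intro r hr
      apply unique_decomp (w := v)
      · intro s hs
        obtain ⟨d, hd, hsd⟩ := memwa _ _ _ hs
        exact (hτv d ((hkap r hr).2.1 d hd)).1 s hsd
      · intro s hs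
        obtain ⟨d, hd, hsd⟩ := memwa _ _ _ hs
        exact (hkap d ((hτu r hr).1 d hd)).2.1 s hsd
      · rw [flatten_wordApply, flatten_wordApply,
          flatτv _ (hkap r hr).2.1, (hkap r hr).2.2,
          flatkap _ (hτu r hr).1, (hτu r hr).2,
          ← wApow_succ, ← wApow_succ']
    · intro r hr
      apply unique_decomp (w := u)
      · intro s hs
        obtain ⟨d, hd, hsd⟩ := memwa _ _ _ hs
        exact (hτu d ((hlam r hr).2.1 d hd)).1 s hsd
      · intro s hs
        obtain ⟨d, hd, hsd⟩ := memwa _ _ _ hs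
        exact (hlam d ((hτv r hr).1 d hd)).2.1 s hsd
      · rw [flatten_wordApply, flatten_wordApply,
          flatτu _ (hlam r hr).2.1, (hlam r hr).2.2,
          flatlam _ (hτv r hr).1, (hτv r hr).2]
    · intro r hr
      apply unique_decomp (w := v)
      · intro s hs
        obtain ⟨d, hd, hsd⟩ := memwa _ _ _ hs
        exact (hkap d ((hlam r hr).2.1 d hd)).2.1 s hsd
      · exact (retsub_pow hτv k r hr).1
      · rw [flatten_wordApply, flatkap _ (hlam r hr).2.1, (hlam r hr).2.2,
          (retsub_pow hτv k r hr).2]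
    · intro r hr
      apply unique_decomp (w := u)
      · intro s hs
        obtain ⟨d, hd, hsd⟩ := memwa _ _ _ hs
        exact (hlam d ((hkap r hr).2.1 d hd)).2.1 s hsd
      · exact (retsub_pow hτu k r hr).1
      · rw [flatten_wordApply, flatlam _ (hkap r hr).2.1, (hkap r hr).2.2,
          (retsub_pow hτu k r hr).2]
  · -- degenerate case: the alphabet is a subsingleton
    push_neg at hk
    have hsub : ∀ b c : A, b = c := by
      by_contra hns
      push_neg at hns
      obtain ⟨b, c, hbc⟩ := hns
      obtain ⟨m, hm, hall⟩ := hprim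
      have h2 : ∀ x : A, 2 ≤ (mPow τ m x).length := fun x =>
        two_le_length_of_mem (hall x b) (hall x c) hbc
      have hgrow : ∀ w : List A, 2 * w.length ≤ (wordApply (mPow τ m) w).length := by
        intro w
        induction w with
        | nil => simp [wordApply]
        | cons a' w ih =>
          rw [wordApply, List.flatMap_cons, List.length_append]
          rw [wordApply] at ih
          have h3 := h2 a'
          simp only [List.length_cons]
          omega
      have key : ∀ t : ℕ, 2 ^ t * u.length ≤ (wordApply (mPow τ (m * t)) u).length := by
        intro t
        induction t with
        | zero => rw [Nat.mul_zero, mPow_zero_apply]; simp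
        | succ t ih =>
          rw [show m * (t + 1) = m + m * t from by ring, wApow_add]
          calc 2 ^ (t + 1) * u.length = 2 * (2 ^ t * u.length) := by ring
          _ ≤ 2 * (wordApply (mPow τ (m * t)) u).length := by omega
          _ ≤ _ := hgrow _
      have hvpos : 1 ≤ v.length := by omega
      have h4 := key v.length
      have h5 : v.length < 2 ^ v.length := Nat.lt_two_pow_self
      have h6 : 2 ^ v.length ≤ 2 ^ v.length * u.length :=
        Nat.le_mul_of_pos_right _ hulen
      have h7 := hk (m * v.length) (Nat.mul_pos hm hvpos)
      have h8 : v.length < (wordApply (mPow τ (m * v.length)) u).length :=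
        lt_of_lt_of_le (lt_of_lt_of_le h5 h6) h4
      omega
    have hoccall : ∀ (w : List A) (i : ℕ), OccursAt X w i := fun w i =>
      lists_eq_of_subsingleton hsub (word_length X i w.length)
    have hrw : ∀ w r : List A, r ∈ ReturnWords X w ↔ r = [a] := by
      intro w r
      constructor
      · rintro ⟨i, j, -, -, hij, hbet, rfl⟩
        have hj : j = i + 1 := by
          by_contra hj
          exact hbet (i + 1) (by omega) (by omega) (hoccall w (i + 1))
        subst hj
        rw [show i + 1 - i = 1 from by omega,
          show word X i 1 = [X i] from by simp [word, List.range_succ], hsub (X i) a]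
      · rintro rfl
        refine ⟨0, 1, hoccall w 0, hoccall w 1, by omega, fun m h1 h2 _ => by omega, ?_⟩
        rw [show (1 : ℕ) - 0 = 1 from rfl, show word X 0 1 = [X 0] from by simp [word, List.range_succ], hX0]
    have hL1 : 1 ≤ (τ a).length := List.length_pos_iff.mpr (hne a)
    have hmk : ∀ (w : List A) (τw : List A → List (List A)), RetSub τ X w τw →
        τw [a] = List.replicate (τ a).length [a] := by
      intro w τw hτw
      obtain ⟨hmem, hflat⟩ := hτw [a] ((hrw w [a]).mpr rfl)
      rw [show wordApply τ [a] = τ a from by simp [wordApply]] at hflat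
      apply List.eq_replicate_iff.mpr
      constructor
      · have h1 : (τw [a]).map List.length = List.replicate (τw [a]).length 1 := by
          apply List.eq_replicate_iff.mpr
          refine ⟨by simp, ?_⟩
          intro b hb
          obtain ⟨d, hd, rfl⟩ := List.mem_map.mp hb
          rw [(hrw w d).mp (hmem d hd)]
          rfl
        have h2 := congrArg List.length hflat
        rw [List.length_flatten, h1] at h2
        simpa using h2
      · exact fun b hb => (hrw w b).mp (hmem b hb)
    refine ⟨1, le_rfl, fun _ => List.replicate (τ a).length [a], fun _ => [[a]],
      ?_, ?_, ?_, ?_, ?_, ?_⟩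
    · intro r hr
      refine ⟨fun h => by
        have h1 := congrArg List.length h
        rw [List.length_replicate, List.length_nil] at h1
        omega, fun s hs => ?_⟩
      rw [List.eq_of_mem_replicate hs]
      exact (hrw u [a]).mpr rfl
    · intro r hr
      refine ⟨by simp, fun s hs => ?_⟩
      rw [List.mem_singleton] at hs
      rw [hs]
      exact (hrw v [a]).mpr rfl
    · intro r hr
      rw [(hrw u r).mp hr]
      simp [wordApply, hmk v τv hτv, hmk u τu hτu, List.flatMap_replicate]
    · intro r hr
      rw [(hrw v r).mp hr]
      simp [wordApply, hmk v τv hτv, hmk u τu hτu, List.flatMap_replicate]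
    · intro r hr
      rw [(hrw v r).mp hr]
      simp [wordApply, mPow, hmk v τv hτv, List.flatMap_replicate]
    · intro r hr
      rw [(hrw u r).mp hr]
      simp [wordApply, mPow, hmk u τu hτu, List.flatMap_replicate]


end Cobham
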